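/- Let 0 < β < 1, p = ⌈1/β⌉ − 1, and let G be a graph on n vertices with minimum degree at least (1−β)n. For integers 2 ≤ t < s ≤ p+1 and any s-clique S: ∑_{T} D_−(T) ≥ (1−β)·s·C(s−2,t−1) − (t−1)·C(s−1,t) + C(s−2,t−2)·D_−(S), where the sum is over all t-cliques T ⊆ S and D_−(U) = min{d(U)/n, (p−|U|+1)β}. -/

import Mathlib

set_option linter.unusedSectionVars false
set_option maxHeartbeats 1000000

/-- The degree of a clique `S`: the number of vertices adjacent to every vertex of `S`. -/
def cliqueDeg {V : Type*} [Fintype V] [DecidableEq V] (G : SimpleGraph V)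
    [DecidableRel G.Adj] (S : Finset V) : ℕ :=
  (Finset.univ.filter (fun v => ∀ u ∈ S, G.Adj u v)).card

/-- `D_-(U) = min {d(U)/n, (p - |U| + 1)β}`. -/
noncomputable def Dminus {V : Type*} [Fintype V] [DecidableEq V] (G : SimpleGraph V)
    [DecidableRel G.Adj] (n p : ℕ) (β : ℝ) (U : Finset V) : ℝ :=
  min ((cliqueDeg G U : ℝ) / n) (((p : ℝ) - U.card + 1) * β)

open Finset


lemma chooseA (b c : ℕ) :
    ((b:ℝ) + c + 3) * ((b+c+1).choose (b+1) : ℝ) + ((b+c+1).choose b : ℝ)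
      = ((c:ℝ) + 2) * ((b+c+2).choose (b+1) : ℝ) := by
  have hp : (b+c+2).choose (b+1) = (b+c+1).choose b + (b+c+1).choose (b+1) :=
    Nat.choose_succ_succ _ _
  have h1 : (b+c+1).choose (b+1) * (b+1) = (b+c+1).choose b * (c+1) := by
    have h := Nat.choose_succ_right_eq (b+c+1) b
    rwa [show b+c+1-b = c+1 by omega] at h
  have h1' : ((b+c+1).choose (b+1) : ℝ) * ((b:ℝ)+1) = ((b+c+1).choose b : ℝ) * ((c:ℝ)+1) := by
    exact_mod_cast h1
  rw [hp]
  push_cast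
  linear_combination h1'

lemma chooseC (b c : ℕ) :
    ((b:ℝ) + c + 2) * ((b+c+1).choose b : ℝ) = ((c:ℝ) + 2) * ((b+c+2).choose b : ℝ) := by
  have h1 : (b+c+2) * (b+c+1).choose b = (b+c+2).choose (b+1) * (b+1) :=
    Nat.add_one_mul_choose_eq (b+c+1) b
  have h2 : (b+c+2).choose (b+1) * (b+1) = (b+c+2).choose b * (c+2) := by
    have h := Nat.choose_succ_right_eq (b+c+2) b
    rwa [show b+c+2-b = c+2 by omega] at h
  have h := h1.trans h2
  have h' : ((b:ℝ)+c+2) * ((b+c+1).choose b : ℝ) = ((b+c+2).choose b : ℝ) * ((c:ℝ)+2) := by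
    exact_mod_cast h
  linarith [h']

lemma chooseB (b c : ℕ) :
    ((b:ℝ) + c + 4) * ((b:ℝ) + 1) * ((b+c+2).choose (b+2) : ℝ)
        + ((b:ℝ) + c + 2) * ((b+c+1).choose b : ℝ)
      = ((c:ℝ) + 2) * ((b:ℝ) + 1) * ((b+c+3).choose (b+2) : ℝ) := by
  have hp : (b+c+3).choose (b+2) = (b+c+2).choose (b+1) + (b+c+2).choose (b+2) :=
    Nat.choose_succ_succ _ _
  have h2 : (b+c+2).choose (b+2) * (b+2) = (b+c+2).choose (b+1) * (c+1) := by
    have h := Nat.choose_succ_right_eq (b+c+2) (b+1)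
    rwa [show b+c+2-(b+1) = c+1 by omega] at h
  have h3 : (b+c+2).choose (b+1) * (b+1) = (b+c+2).choose b * (c+2) := by
    have h := Nat.choose_succ_right_eq (b+c+2) b
    rwa [show b+c+2-b = c+2 by omega] at h
  have h2' : ((b+c+2).choose (b+2) : ℝ) * ((b:ℝ)+2) = ((b+c+2).choose (b+1) : ℝ) * ((c:ℝ)+1) := by
    exact_mod_cast h2
  have h3' : ((b+c+2).choose (b+1) : ℝ) * ((b:ℝ)+1) = ((b+c+2).choose b : ℝ) * ((c:ℝ)+2) := by
    exact_mod_cast h3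
  have hC := chooseC b c
  rw [hp]
  push_cast
  linear_combination hC + ((b:ℝ)+1) * h2' - h3'

lemma stepId (b c : ℕ) (β X : ℝ) :
    ((b:ℝ)+c+4) * ((1-β) * ((b:ℝ)+c+3) * ((b+c+1).choose (b+1) : ℝ)
        - ((b:ℝ)+1) * ((b+c+2).choose (b+2) : ℝ))
      + ((b+c+1).choose b : ℝ) * ((((b:ℝ)+c+4) - 2) * X + (2 - ((b:ℝ)+c+4)*β))
    = ((c:ℝ)+2) * ((1-β) * ((b:ℝ)+c+4) * ((b+c+2).choose (b+1) : ℝ)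
        - ((b:ℝ)+1) * ((b+c+3).choose (b+2) : ℝ)
      + ((b+c+2).choose b : ℝ) * X) := by
  linear_combination (1-β) * ((b:ℝ)+c+4) * chooseA b c - chooseB b c + X * chooseC b c

section Helpers

variable {V : Type*} [Fintype V] [DecidableEq V] (G : SimpleGraph V) [DecidableRel G.Adj]


variable {V : Type*} [Fintype V] [DecidableEq V] (G : SimpleGraph V) [DecidableRel G.Adj]

lemma filter_adj_card (u : V) :
    (univ.filter fun w => G.Adj u w).card = G.degree u := by
  rw [← SimpleGraph.card_neighborFinset_eq_degree]
  congr 1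
  ext w
  simp [SimpleGraph.mem_neighborFinset]

lemma filter_nonadj_card (u : V) :
    (univ.filter fun w => ¬ G.Adj u w).card + G.degree u = Fintype.card V := by
  rw [← filter_adj_card G u, add_comm, Finset.card_filter_add_card_filter_not,
    Finset.card_univ]

lemma degree_le_n (u : V) : G.degree u ≤ Fintype.card V := by
  have := filter_nonadj_card G u; omega

lemma cliqueDeg_anti {T S : Finset V} (h : T ⊆ S) : cliqueDeg G S ≤ cliqueDeg G T := by
  apply card_le_card
  intro w hw
  simp only [cliqueDeg, mem_filter, mem_univ, true_and] at *
  exact fun u hu => hw u (h hu)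

lemma cliqueDeg_lower (T : Finset V) :
    Fintype.card V ≤ cliqueDeg G T + ∑ u ∈ T, (Fintype.card V - G.degree u) := by
  classical
  have h2 := Finset.card_filter_add_card_filter_not
    (s := (univ : Finset V)) (p := fun w => ∀ u ∈ T, G.Adj u w)
  have h1 : (univ.filter fun w => ¬ ∀ u ∈ T, G.Adj u w).card
      ≤ ∑ u ∈ T, (Fintype.card V - G.degree u) := by
    have hsub : (univ.filter fun w => ¬ ∀ u ∈ T, G.Adj u w)
        ⊆ T.biUnion (fun u => univ.filter fun w => ¬ G.Adj u w) := by
      intro w hw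
      simp only [mem_filter, mem_univ, true_and, not_forall] at hw
      obtain ⟨u, hu, hadj⟩ := hw
      exact mem_biUnion.mpr ⟨u, hu, by simp [hadj]⟩
    refine le_trans (card_le_card hsub) (le_trans card_biUnion_le (Finset.sum_le_sum ?_))
    intro u hu
    have := filter_nonadj_card G u
    omega
  have : cliqueDeg G T + (univ.filter fun w => ¬ ∀ u ∈ T, G.Adj u w).card = Fintype.card V := by
    rw [cliqueDeg]
    rw [← Finset.card_univ]
    exact h2
  omega

lemma cliqueDeg_erase_le {S : Finset V} {v : V} (hv : v ∈ S) :
    cliqueDeg G (S.erase v) ≤ cliqueDeg G S + (Fintype.card V - G.degree v) := by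
  classical
  have hsub : (univ.filter fun w => ∀ u ∈ S.erase v, G.Adj u w)
      ⊆ (univ.filter fun w => ∀ u ∈ S, G.Adj u w) ∪ (univ.filter fun w => ¬ G.Adj v w) := by
    intro w hw
    simp only [mem_filter, mem_univ, true_and, mem_union] at *
    by_cases hadj : G.Adj v w
    · left
      intro u hu
      rcases eq_or_ne u v with rfl | hne
      · exact hadj
      · exact hw u (mem_erase.mpr ⟨hne, hu⟩)
    · right; exact hadj
  have := card_le_card hsub
  have h2 := card_union_le (univ.filter fun w => ∀ u ∈ S, G.Adj u w)
    (univ.filter fun w => ¬ G.Adj v w)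
  have h3 := filter_nonadj_card G v
  have h4 := degree_le_n G v
  simp only [cliqueDeg]
  omega


-- F1 : the key counting inequality
lemma sum_cliqueDeg_erase (S : Finset V) (hS2 : 2 ≤ S.card) :
    (S.card - 2) * cliqueDeg G S + 2 * Fintype.card V
      ≤ (∑ v ∈ S, cliqueDeg G (S.erase v)) + ∑ u ∈ S, (Fintype.card V - G.degree u) := by
  classical
  have hswap1 : ∑ v ∈ S, cliqueDeg G (S.erase v)
      = ∑ w : V, (S.filter fun v => ∀ u ∈ S.erase v, G.Adj u w).card := by
    simp only [cliqueDeg, card_filter]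
    exact Finset.sum_comm
  have hswap2 : ∑ u ∈ S, (Fintype.card V - G.degree u)
      = ∑ w : V, (S.filter fun u => ¬ G.Adj u w).card := by
    have h : ∀ u : V, Fintype.card V - G.degree u
        = (univ.filter fun w => ¬ G.Adj u w).card := fun u => by
      have := filter_nonadj_card G u; omega
    simp only [h, card_filter]
    exact Finset.sum_comm
  have hdeg : cliqueDeg G S = ∑ w : V, (if (∀ u ∈ S, G.Adj u w) then 1 else 0) :=
    card_filter _ _
  have key : ∀ w : V, (S.card - 2) * (if (∀ u ∈ S, G.Adj u w) then 1 else 0) + 2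
      ≤ (S.filter fun v => ∀ u ∈ S.erase v, G.Adj u w).card
        + (S.filter fun u => ¬ G.Adj u w).card := by
    intro w
    by_cases hP : ∀ u ∈ S, G.Adj u w
    · have hg : (S.filter fun v => ∀ u ∈ S.erase v, G.Adj u w) = S :=
        filter_true_of_mem (fun v _ => fun u hu => hP u (mem_of_mem_erase hu))
    -- (s-2)*1 + 2 = s ≤ s + _
      rw [if_pos hP, hg]
      omega
    · rw [if_neg hP]
      have hA1 : 1 ≤ (S.filter fun u => ¬ G.Adj u w).card := by
        rw [Nat.one_le_iff_ne_zero, Ne, card_eq_zero, filter_eq_empty_iff]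
        push_neg
        simpa using hP
      rcases Nat.lt_or_ge (S.filter fun u => ¬ G.Adj u w).card 2 with h1 | h2
      · have hA : (S.filter fun u => ¬ G.Adj u w).card = 1 := by omega
        obtain ⟨u0, hu0⟩ := card_eq_one.mp hA
        have hu0S : u0 ∈ S := by
          have : u0 ∈ S.filter fun u => ¬ G.Adj u w := by rw [hu0]; exact mem_singleton_self u0
          exact (mem_filter.mp this).1
        have hg1 : u0 ∈ S.filter fun v => ∀ u ∈ S.erase v, G.Adj u w := by
          refine mem_filter.mpr ⟨hu0S, fun u hu => ?_⟩
          by_contra hadj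
          have hmem : u ∈ ({u0} : Finset V) := by
            rw [← hu0]; exact mem_filter.mpr ⟨mem_of_mem_erase hu, hadj⟩
          exact (mem_erase.mp hu).1 (mem_singleton.mp hmem)
        have := card_pos.mpr ⟨u0, hg1⟩
        omega
      · omega
  calc (S.card - 2) * cliqueDeg G S + 2 * Fintype.card V
      = ∑ w : V, ((S.card - 2) * (if (∀ u ∈ S, G.Adj u w) then 1 else 0) + 2) := by
        rw [Finset.sum_add_distrib, ← Finset.mul_sum, ← hdeg, Finset.sum_const, Finset.card_univ,
          smul_eq_mul, mul_comm]
        ring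
    _ ≤ ∑ w : V, ((S.filter fun v => ∀ u ∈ S.erase v, G.Adj u w).card
          + (S.filter fun u => ¬ G.Adj u w).card) := Finset.sum_le_sum (fun w _ => key w)
    _ = _ := by rw [Finset.sum_add_distrib, ← hswap1, ← hswap2]

lemma sum_powerset_pred (S : Finset V) (hS : 0 < S.card) (f : Finset V → ℝ) :
    ∑ T ∈ S.powersetCard (S.card - 1), f T = ∑ v ∈ S, f (S.erase v) := by
  classical
  have himg : S.powersetCard (S.card - 1) = S.image (fun v => S.erase v) := by
    ext T
    simp only [mem_powersetCard, mem_image]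
    constructor
    · rintro ⟨hTS, hTc⟩
      have hsd : (S \ T).card = 1 := by rw [card_sdiff_of_subset hTS]; omega
      obtain ⟨v, hv⟩ := card_eq_one.mp hsd
      have hvmem : v ∈ S \ T := by rw [hv]; exact mem_singleton_self v
      refine ⟨v, (mem_sdiff.mp hvmem).1, ?_⟩
      have hsub : T ⊆ S.erase v := by
        intro u hu
        refine mem_erase.mpr ⟨?_, hTS hu⟩
        rintro rfl
        exact (mem_sdiff.mp hvmem).2 hu
      refine (Finset.eq_of_subset_of_card_le hsub ?_).symm
      rw [card_erase_of_mem (mem_sdiff.mp hvmem).1, hTc]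
    · rintro ⟨v, hv, rfl⟩
      exact ⟨erase_subset _ _, by rw [card_erase_of_mem hv]⟩
  rw [himg, Finset.sum_image]
  intro x hx y hy hxy
  by_contra hne
  have hxm : x ∈ S.erase y := mem_erase.mpr ⟨hne, hx⟩
  rw [← show S.erase x = S.erase y from hxy] at hxm
  exact notMem_erase x S hxm

lemma sum_erase_powersetCard (S : Finset V) (t : ℕ) (htS : t ≤ S.card) (f : Finset V → ℝ) :
    ∑ v ∈ S, ∑ T ∈ (S.erase v).powersetCard t, f T
      = ((S.card - t : ℕ) : ℝ) * ∑ T ∈ S.powersetCard t, f T := by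
  classical
  have h1 : ∀ v : V, (S.erase v).powersetCard t
      = (S.powersetCard t).filter (fun T => v ∉ T) := by
    intro v
    ext T
    simp only [mem_powersetCard, mem_filter, subset_erase]
    tauto
  calc ∑ v ∈ S, ∑ T ∈ (S.erase v).powersetCard t, f T
      = ∑ v ∈ S, ∑ T ∈ S.powersetCard t, if v ∉ T then f T else 0 := by
        refine Finset.sum_congr rfl fun v _ => ?_
        rw [h1 v, Finset.sum_filter]
    _ = ∑ T ∈ S.powersetCard t, ∑ v ∈ S, if v ∉ T then f T else 0 := Finset.sum_comm
    _ = ∑ T ∈ S.powersetCard t, ((S.card - t : ℕ) : ℝ) * f T := by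
        refine Finset.sum_congr rfl fun T hT => ?_
        rw [← Finset.sum_filter]
        rw [Finset.sum_const]
        have hTS := (mem_powersetCard.mp hT).1
        have hTc := (mem_powersetCard.mp hT).2
        have : S.filter (fun v => v ∉ T) = S \ T := by
          rw [Finset.sdiff_eq_filter]
        rw [this, card_sdiff_of_subset hTS, hTc, nsmul_eq_mul]
    _ = _ := by rw [← Finset.mul_sum]

lemma star (n : ℕ) (hV : Fintype.card V = n)
    (β : ℝ) (hβ0 : 0 < β) (p : ℕ) (hpβ : 1 ≤ ((p:ℝ) + 1) * β)
    (hδ : ∀ v : V, (1 - β) * n ≤ (G.degree v : ℝ))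
    (S : Finset V) (s : ℕ) (hcard : S.card = s) (hs3 : 3 ≤ s) (hsp : s ≤ p + 1) :
    ((s:ℝ) - 2) * Dminus G n p β S + (2 - s * β)
      ≤ ∑ v ∈ S, Dminus G n p β (S.erase v) := by
  classical
  have hns : s ≤ n := by rw [← hcard, ← hV]; exact card_le_univ S
  have hn0 : 0 < n := by omega
  have hnR : (0:ℝ) < n := by exact_mod_cast hn0
  have hdegle : ∀ u : V, (G.degree u : ℝ) ≤ n := by
    intro u
    have := degree_le_n G u
    rw [hV] at this
    exact_mod_cast this
  have hcastdeg : ∀ u : V, ((Fintype.card V - G.degree u : ℕ) : ℝ) = (n:ℝ) - G.degree u := by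
    intro u
    rw [Nat.cast_sub (degree_le_n G u), hV]
  have hcastdeg' : ∀ u : V, ((n - G.degree u : ℕ) : ℝ) = (n:ℝ) - G.degree u := by
    intro u
    rw [Nat.cast_sub (hV ▸ degree_le_n G u)]
  set D : ℝ := (cliqueDeg G S : ℝ) / n with hD
  set c : ℝ := ((p:ℝ) - s + 2) * β with hc
  set x : V → ℝ := fun v => (cliqueDeg G (S.erase v) : ℝ) / n with hxdef
  have hsR : (3:ℝ) ≤ (s:ℝ) := by exact_mod_cast hs3
  have hspR : (s:ℝ) ≤ (p:ℝ) + 1 := by exact_mod_cast hsp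
  -- rewrite the sum and Dminus S
  have hsum_eq : ∑ v ∈ S, Dminus G n p β (S.erase v) = ∑ v ∈ S, min (x v) c := by
    refine Finset.sum_congr rfl fun v hv => ?_
    simp only [Dminus, card_erase_of_mem hv, hcard, hxdef, hc]
    congr 1
    rw [Nat.cast_sub (by omega : 1 ≤ s)]
    ring
  have hS_eq : Dminus G n p β S = min D (c - β) := by
    simp only [Dminus, hcard, hD, hc]
    congr 1
    ring
  rw [hsum_eq, hS_eq]
  set M : ℝ := min D (c - β) with hM
  -- basic facts
  have hcβ : 0 ≤ c - β := by
    have h : c - β = ((p:ℝ) - s + 1) * β := by rw [hc]; ring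
    rw [h]
    apply mul_nonneg _ hβ0.le
    linarith
  have hLc : 1 - ((s:ℝ) - 1) * β ≤ c := by
    have h : c + ((s:ℝ) - 1) * β = ((p:ℝ) + 1) * β := by rw [hc]; ring
    linarith
  have hD0 : 0 ≤ D := by rw [hD]; positivity
  have hDn : D * n = (cliqueDeg G S : ℝ) := by
    rw [hD]; field_simp
  have hMD : M ≤ D := min_le_left _ _
  have hMc : M ≤ c - β := min_le_right _ _
  have hM0 : 0 ≤ M := le_min hD0 hcβ
  have hxub : ∀ v ∈ S, x v ≤ D + β := by
    intro v hv
    have h2 := cliqueDeg_erase_le G hv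
    have h2' : (cliqueDeg G (S.erase v) : ℝ) ≤ (cliqueDeg G S : ℝ) + ((n:ℝ) - G.degree v) := by
      rw [← hcastdeg v]
      exact_mod_cast h2
    have hdv := hδ v
    simp only [hxdef]
    rw [div_le_iff₀ hnR]
    have e : (D + β) * n = (cliqueDeg G S : ℝ) + β * n := by rw [← hDn]; ring
    rw [e]
    nlinarith [hdv]
  have hxlb : ∀ v ∈ S, 1 - ((s:ℝ) - 1) * β ≤ x v := by
    intro v hv
    have h1 := cliqueDeg_lower G (S.erase v)
    have h1' : (n:ℝ) ≤ (cliqueDeg G (S.erase v) : ℝ)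
        + ∑ u ∈ S.erase v, ((n:ℝ) - G.degree u) := by
      have := h1
      rw [hV] at this
      have hcast : ((∑ u ∈ S.erase v, (n - G.degree u) : ℕ) : ℝ)
          = ∑ u ∈ S.erase v, ((n:ℝ) - G.degree u) := by
        rw [Nat.cast_sum]
        exact Finset.sum_congr rfl fun u _ => hcastdeg' u
      calc (n:ℝ) ≤ ((cliqueDeg G (S.erase v) + ∑ u ∈ S.erase v, (n - G.degree u) : ℕ) : ℝ) := by
            exact_mod_cast this
        _ = _ := by rw [Nat.cast_add, hcast]
    have hbound : ∑ u ∈ S.erase v, ((n:ℝ) - G.degree u) ≤ ((s:ℝ) - 1) * (β * n) := by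
      have hb : ∀ u ∈ S.erase v, (n:ℝ) - G.degree u ≤ β * n := by
        intro u _
        have := hδ u
        nlinarith
      calc ∑ u ∈ S.erase v, ((n:ℝ) - G.degree u) ≤ (S.erase v).card • (β * n) :=
            Finset.sum_le_card_nsmul _ _ _ hb
        _ = ((s:ℝ) - 1) * (β * n) := by
            rw [card_erase_of_mem hv, hcard, nsmul_eq_mul, Nat.cast_sub (by omega : 1 ≤ s)]
            ring
    simp only [hxdef]
    rw [le_div_iff₀ hnR]
    nlinarith
  have hx0 : ∀ v, 0 ≤ x v := fun v => by simp only [hxdef]; positivity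
  have hf1 : ((s:ℝ) - 2) * D + 2 - s * β ≤ ∑ v ∈ S, x v := by
    have h1 := sum_cliqueDeg_erase G S (by omega)
    rw [hcard, hV] at h1
    have h1' : ((s:ℝ) - 2) * (cliqueDeg G S : ℝ) + 2 * n
        ≤ (∑ v ∈ S, (cliqueDeg G (S.erase v) : ℝ)) + ∑ u ∈ S, ((n:ℝ) - G.degree u) := by
      have hcast1 : (((s - 2) * cliqueDeg G S + 2 * n : ℕ) : ℝ)
          = ((s:ℝ) - 2) * (cliqueDeg G S : ℝ) + 2 * n := by
        push_cast [Nat.cast_sub (by omega : 2 ≤ s)]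
        ring
      have hcast2 : (((∑ v ∈ S, cliqueDeg G (S.erase v)) + ∑ u ∈ S, (n - G.degree u) : ℕ) : ℝ)
          = (∑ v ∈ S, (cliqueDeg G (S.erase v) : ℝ)) + ∑ u ∈ S, ((n:ℝ) - G.degree u) := by
        push_cast
        congr 1
        exact Finset.sum_congr rfl fun u _ => hcastdeg' u
      rw [← hcast1, ← hcast2]
      exact_mod_cast h1
    have hγ : ∑ u ∈ S, ((n:ℝ) - G.degree u) ≤ (s:ℝ) * (β * n) := by
      have hb : ∀ u ∈ S, (n:ℝ) - G.degree u ≤ β * n := by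
        intro u _
        have := hδ u
        nlinarith
      calc ∑ u ∈ S, ((n:ℝ) - G.degree u) ≤ S.card • (β * n) :=
            Finset.sum_le_card_nsmul _ _ _ hb
        _ = (s:ℝ) * (β * n) := by rw [hcard, nsmul_eq_mul]
    have hx_sum : ∑ v ∈ S, x v = (∑ v ∈ S, (cliqueDeg G (S.erase v) : ℝ)) / n := by
      rw [Finset.sum_div]
    rw [hx_sum, le_div_iff₀ hnR]
    have e : (((s:ℝ) - 2) * D + 2 - s * β) * n
        = ((s:ℝ) - 2) * (cliqueDeg G S : ℝ) + 2 * n - s * (β * n) := by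
      rw [← hDn]; ring
    rw [e]
    linarith
  -- the capped set
  set K : Finset V := S.filter (fun v => c < x v) with hK
  have hKS : K ⊆ S := filter_subset _ _
  have hkS : K.card ≤ s := hcard ▸ card_le_card hKS
  by_cases hk : K.card + 2 ≤ s
  · -- few capped vertices
    have hb1 : ∀ v ∈ S, x v - (if v ∈ K then D - M else 0) ≤ min (x v) c := by
      intro v hv
      by_cases hvK : v ∈ K
      · have hcx : c < x v := (mem_filter.mp hvK).2
        rw [if_pos hvK, min_eq_right hcx.le]
        have := hxub v hv
        linarith
      · have hcx : ¬ c < x v := fun h => hvK (mem_filter.mpr ⟨hv, h⟩)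
        push_neg at hcx
        rw [if_neg hvK, min_eq_left hcx]
        linarith
    have hsum1 : ∑ v ∈ S, (x v - (if v ∈ K then D - M else 0)) ≤ ∑ v ∈ S, min (x v) c :=
      Finset.sum_le_sum hb1
    have hsplit : ∑ v ∈ S, (x v - (if v ∈ K then D - M else 0))
        = ∑ v ∈ S, x v - (K.card : ℝ) * (D - M) := by
      rw [Finset.sum_sub_distrib]
      congr 1
      rw [Finset.sum_ite_mem, Finset.inter_eq_right.mpr hKS, Finset.sum_const, nsmul_eq_mul]
    have hkR : (K.card : ℝ) ≤ (s:ℝ) - 2 := by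
      have : (K.card : ℝ) + 2 ≤ (s : ℝ) := by exact_mod_cast hk
      linarith
    have hprod : 0 ≤ ((s:ℝ) - 2 - K.card) * (D - M) := mul_nonneg (by linarith) (by linarith)
    rw [hsplit] at hsum1
    linarith
  · -- almost all capped
    push_neg at hk
    have hb2 : ∀ v ∈ S, (if v ∈ K then c else 1 - ((s:ℝ) - 1) * β) ≤ min (x v) c := by
      intro v hv
      by_cases hvK : v ∈ K
      · have hcx : c < x v := (mem_filter.mp hvK).2
        rw [if_pos hvK, min_eq_right hcx.le]
      · rw [if_neg hvK]
        exact le_min (hxlb v hv) hLc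
    have hsum2 : ∑ v ∈ S, (if v ∈ K then c else 1 - ((s:ℝ) - 1) * β) ≤ ∑ v ∈ S, min (x v) c :=
      Finset.sum_le_sum hb2
    have hsplit2 : ∑ v ∈ S, (if v ∈ K then c else 1 - ((s:ℝ) - 1) * β)
        = (K.card : ℝ) * c + ((s:ℝ) - K.card) * (1 - ((s:ℝ) - 1) * β) := by
      rw [← Finset.sum_filter_add_sum_filter_not S (fun v => v ∈ K)]
      have e1 : S.filter (fun v => v ∈ K) = K := by
        rw [Finset.filter_mem_eq_inter, Finset.inter_eq_right.mpr hKS]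
      have e2 : S.filter (fun v => v ∉ K) = S \ K := by rw [Finset.sdiff_eq_filter]
      have t1 : ∑ v ∈ S.filter (fun v => v ∈ K), (if v ∈ K then c else 1 - ((s:ℝ) - 1) * β)
          = (K.card : ℝ) * c := by
        rw [e1, Finset.sum_congr rfl (fun v hv => if_pos hv), Finset.sum_const, nsmul_eq_mul]
      have t2 : ∑ v ∈ S.filter (fun v => v ∉ K), (if v ∈ K then c else 1 - ((s:ℝ) - 1) * β)
          = ((s:ℝ) - K.card) * (1 - ((s:ℝ) - 1) * β) := by
        rw [e2, Finset.sum_congr rfl (fun v hv => if_neg (mem_sdiff.mp hv).2), Finset.sum_const,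
          card_sdiff_of_subset hKS, hcard, nsmul_eq_mul, Nat.cast_sub hkS]
      rw [t1, t2]
    have hk1R : (s:ℝ) - 1 ≤ (K.card : ℝ) := by
      have h' : s ≤ K.card + 1 := by omega
      have : (s:ℝ) ≤ (K.card : ℝ) + 1 := by exact_mod_cast h'
      linarith
    have hkRle : (K.card : ℝ) ≤ (s:ℝ) := by exact_mod_cast hkS
    have hprod2 : 0 ≤ ((K.card : ℝ) - ((s:ℝ) - 1)) * (c - (1 - ((s:ℝ) - 1) * β)) :=
      mul_nonneg (by linarith) (by linarith)
    have hprod3 : 0 ≤ ((s:ℝ) - 2) * ((c - β) - M) := mul_nonneg (by linarith) (by linarith)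
    rw [hsplit2] at hsum2
    linarith

lemma main (n : ℕ) (hV : Fintype.card V = n)
    (β : ℝ) (hβ0 : 0 < β) (p : ℕ) (hpβ : 1 ≤ ((p:ℝ) + 1) * β)
    (hδ : ∀ v : V, (1 - β) * n ≤ (G.degree v : ℝ)) :
    ∀ s t : ℕ, ∀ S : Finset V, S.card = s → 2 ≤ t → t < s → s ≤ p + 1 →
      (1 - β) * s * (Nat.choose (s - 2) (t - 1) : ℝ)
            - ((t : ℝ) - 1) * (Nat.choose (s - 1) t : ℝ)
          + (Nat.choose (s - 2) (t - 2) : ℝ) * Dminus G n p β S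
        ≤ ∑ T ∈ S.powersetCard t, Dminus G n p β T := by
  intro s
  induction s using Nat.strong_induction_on with
  | _ s IH =>
  intro t S hcard ht hts hsp
  rcases Nat.lt_or_ge (t + 1) s with hlt | hge
  · -- inductive step : t + 1 < s
    obtain ⟨b, rfl⟩ : ∃ b, t = b + 2 := ⟨t - 2, by omega⟩
    obtain ⟨c, rfl⟩ : ∃ c, s = b + c + 4 := ⟨s - (b + 4), by omega⟩
    have htS : b + 2 ≤ S.card := by omega
    have hswap := sum_erase_powersetCard S (b+2) htS (Dminus G n p β)
    rw [hcard, show b + c + 4 - (b + 2) = c + 2 by omega] at hswap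
    have hIH : ∀ v ∈ S,
        (1 - β) * ((b+c+3 : ℕ) : ℝ) * (Nat.choose (b+c+1) (b+1) : ℝ)
            - (((b+2 : ℕ) : ℝ) - 1) * (Nat.choose (b+c+2) (b+2) : ℝ)
          + (Nat.choose (b+c+1) b : ℝ) * Dminus G n p β (S.erase v)
        ≤ ∑ T ∈ (S.erase v).powersetCard (b+2), Dminus G n p β T := by
      intro v hv
      have h := IH (b+c+3) (by omega) (b+2) (S.erase v)
        (by rw [card_erase_of_mem hv, hcard]; omega) (by omega) (by omega) (by omega)
      rw [show b+c+3-2 = b+c+1 by omega, show b+2-1 = b+1 by omega,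
        show b+c+3-1 = b+c+2 by omega, show b+2-2 = b by omega] at h
      exact h
    have hsum := Finset.sum_le_sum hIH
    have hL : ∑ v ∈ S, ((1 - β) * ((b+c+3 : ℕ) : ℝ) * (Nat.choose (b+c+1) (b+1) : ℝ)
            - (((b+2 : ℕ) : ℝ) - 1) * (Nat.choose (b+c+2) (b+2) : ℝ)
          + (Nat.choose (b+c+1) b : ℝ) * Dminus G n p β (S.erase v))
        = ((b+c+4 : ℕ) : ℝ) * ((1 - β) * ((b+c+3 : ℕ) : ℝ) * (Nat.choose (b+c+1) (b+1) : ℝ)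
            - (((b+2 : ℕ) : ℝ) - 1) * (Nat.choose (b+c+2) (b+2) : ℝ))
          + (Nat.choose (b+c+1) b : ℝ) * ∑ v ∈ S, Dminus G n p β (S.erase v) := by
      rw [Finset.sum_add_distrib, Finset.sum_const, hcard, nsmul_eq_mul, ← Finset.mul_sum]
    have hstar := star G n hV β hβ0 p hpβ hδ S (b+c+4) hcard (by omega) hsp
    have hC3 : (0:ℝ) ≤ (Nat.choose (b+c+1) b : ℝ) := Nat.cast_nonneg _
    have hineq : ((b+c+4 : ℕ) : ℝ) * ((1 - β) * ((b+c+3 : ℕ) : ℝ) * (Nat.choose (b+c+1) (b+1) : ℝ)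
            - (((b+2 : ℕ) : ℝ) - 1) * (Nat.choose (b+c+2) (b+2) : ℝ))
          + (Nat.choose (b+c+1) b : ℝ)
            * ((((b+c+4 : ℕ) : ℝ)) - 2) * Dminus G n p β S
          + (Nat.choose (b+c+1) b : ℝ) * (2 - ((b+c+4 : ℕ) : ℝ) * β)
        ≤ ((c+2 : ℕ) : ℝ) * ∑ T ∈ S.powersetCard (b+2), Dminus G n p β T := by
      have h2 := mul_le_mul_of_nonneg_left hstar hC3
      rw [← hswap]
      calc _ ≤ ((b+c+4 : ℕ) : ℝ) * ((1 - β) * ((b+c+3 : ℕ) : ℝ) * (Nat.choose (b+c+1) (b+1) : ℝ)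
            - (((b+2 : ℕ) : ℝ) - 1) * (Nat.choose (b+c+2) (b+2) : ℝ))
          + (Nat.choose (b+c+1) b : ℝ) * ∑ v ∈ S, Dminus G n p β (S.erase v) := by
            push_cast at h2 ⊢
            nlinarith [h2]
        _ = _ := hL.symm
        _ ≤ _ := hsum
    rw [show b+c+4-2 = b+c+2 by omega, show b+2-1 = b+1 by omega,
      show b+c+4-1 = b+c+3 by omega, show b+2-2 = b by omega]
    have hpos : (0:ℝ) < ((c:ℝ) + 2) := by positivity
    refine le_of_mul_le_mul_left ?_ hpos
    have hid := stepId b c β (Dminus G n p β S)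
    push_cast at hineq ⊢
    linarith [hineq, hid]
  · -- base case : s = t + 1
    have hst : s = t + 1 := by omega
    subst hst
    have hs := star G n hV β hβ0 p hpβ hδ S (t+1) hcard (by omega) hsp
    have hrw : ∑ T ∈ S.powersetCard t, Dminus G n p β T
        = ∑ v ∈ S, Dminus G n p β (S.erase v) := by
      have he : t = S.card - 1 := by omega
      rw [he]
      exact sum_powerset_pred S (by omega) _
    rw [hrw, show t+1-2 = t-1 by omega, show t+1-1 = t by omega, Nat.choose_self,
      show t-1 = (t-2)+1 by omega, Nat.choose_self, Nat.choose_succ_self_right]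
    have ec : ((t - 2 + 1 : ℕ) : ℝ) = (t:ℝ) - 1 := by
      rw [Nat.cast_add, Nat.cast_sub ht]
      push_cast
      ring
    have ett : ((t+1 : ℕ) : ℝ) = (t:ℝ) + 1 := by push_cast; ring
    rw [ec, ett]
    rw [ett] at hs
    push_cast at hs ⊢
    linarith

end Helpers

theorem stmt_12 {V : Type*} [Fintype V] [DecidableEq V] (n : ℕ)
    (hV : Fintype.card V = n) (G : SimpleGraph V) [DecidableRel G.Adj]
    (β : ℝ) (hβ0 : 0 < β) (hβ1 : β < 1) (p : ℕ) (hp : p = ⌈1 / β⌉₊ - 1)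
    (hδ : ∀ v : V, (1 - β) * n ≤ (G.degree v : ℝ))
    (S : Finset V) (s t : ℕ) (hS : G.IsNClique s S)
    (ht : 2 ≤ t) (hts : t < s) (hsp : s ≤ p + 1) :
    (1 - β) * s * (Nat.choose (s - 2) (t - 1) : ℝ)
          - ((t : ℝ) - 1) * (Nat.choose (s - 1) t : ℝ)
        + (Nat.choose (s - 2) (t - 2) : ℝ) * Dminus G n p β S
      ≤ ∑ T ∈ S.powersetCard t, Dminus G n p β T := by
  have hceil : 1 ≤ ⌈1 / β⌉₊ := by
    rw [Nat.one_le_ceil_iff]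
    positivity
  have hp1 : p + 1 = ⌈1 / β⌉₊ := by omega
  have hpβ : 1 ≤ ((p:ℝ) + 1) * β := by
    have hle : 1 / β ≤ (⌈1 / β⌉₊ : ℝ) := Nat.le_ceil _
    have hcast : ((p:ℝ) + 1) = (⌈1 / β⌉₊ : ℝ) := by exact_mod_cast congrArg (Nat.cast (R := ℝ)) hp1
    rw [hcast]
    rw [div_le_iff₀ hβ0] at hle
    linarith
  exact main G n hV β hβ0 p hpβ hδ s t S hS.2 ht hts hsp
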